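/- For every natural number n and all s, t with t - s = ε, the polynomial identity Σ_{k=0}^n k! t^k C(n,k)^2 · N^{↓(n-k)} = Σ_{k=0}^n k! s^k C(n,k)^2 · (N+ε)^{↑(n-k)} holds, where N^{↓m} = N(N-ε)···(N-(m-1)ε) is the falling factorial and (N+ε)^{↑m} = (N+ε)(N+2ε)···(N+mε) is the rising factorial with increment ε. -/

import Mathlib

open Finset in
private lemma natC (n k a : ℕ) (hak : a ≤ k) (hkn : k ≤ n) :
    k.factorial * (n.choose k) ^ 2 * k.choose a =
      a.factorial * (k - a).factorial * (n.choose a) ^ 2 * ((n - a).choose (k - a)) ^ 2 := by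
  have han : a ≤ n := hak.trans hkn
  have c1 : n.choose k * k.factorial * (n - k).factorial = n.factorial :=
    Nat.choose_mul_factorial_mul_factorial hkn
  have c2 : n.choose a * a.factorial * (n - a).factorial = n.factorial :=
    Nat.choose_mul_factorial_mul_factorial han
  have c3 : (n - a).choose (k - a) * (k - a).factorial * (n - k).factorial = (n - a).factorial := by
    have h := Nat.choose_mul_factorial_mul_factorial (show k - a ≤ n - a by omega)
    rwa [show n - a - (k - a) = n - k by omega] at h
  have c4 : k.choose a * a.factorial * (k - a).factorial = k.factorial :=
    Nat.choose_mul_factorial_mul_factorial hak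
  have hM : 0 < a.factorial * (k - a).factorial * (n - k).factorial ^ 2 := by positivity
  apply Nat.eq_of_mul_eq_mul_right hM
  calc k.factorial * n.choose k ^ 2 * k.choose a *
        (a.factorial * (k - a).factorial * (n - k).factorial ^ 2)
      = n.choose k ^ 2 * (n - k).factorial ^ 2 * k.factorial *
          (k.choose a * a.factorial * (k - a).factorial) := by ring
    _ = (n.choose k * k.factorial * (n - k).factorial) ^ 2 := by rw [c4]; ring
    _ = n.factorial ^ 2 := by rw [c1]
    _ = (n.choose a * a.factorial * (n - a).factorial) ^ 2 := by rw [c2]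
    _ = (n.choose a * a.factorial *
          ((n - a).choose (k - a) * (k - a).factorial * (n - k).factorial)) ^ 2 := by rw [c3]
    _ = a.factorial * (k - a).factorial * n.choose a ^ 2 * ((n - a).choose (k - a)) ^ 2 *
          (a.factorial * (k - a).factorial * (n - k).factorial ^ 2) := by ring

open Finset in
private lemma natB (m i : ℕ) (him : i ≤ m) :
    ((m + 1).choose (i + 1)) ^ 2 * (m - i).factorial =
      (m.choose i) ^ 2 * (m - i).factorial +
        (m + 2 + i) * ((m.choose (i + 1)) ^ 2 * (m - i - 1).factorial) := by
  rcases eq_or_lt_of_le him with rfl | hlt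
  · simp [Nat.choose_succ_self, Nat.choose_self]
  · have hfac : (m - i).factorial = (m - i) * (m - i - 1).factorial :=
      (Nat.mul_factorial_pred (by omega : m - i ≠ 0)).symm
    have hr : m.choose (i + 1) * (i + 1) = m.choose i * (m - i) := Nat.choose_succ_right_eq m i
    rw [Nat.choose_succ_succ, hfac]
    zify [him, show 1 ≤ m - i by omega] at hr ⊢
    linear_combination (-2 * (m.choose (i + 1) : ℤ) * ((m - i - 1).factorial : ℤ)) * hr

open Finset in
private lemma lah {R : Type*} [CommRing R] (N ε : R) (m : ℕ) :
    ∏ j ∈ range m, (N + ((j : R) + 1) * ε) =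
      ∑ i ∈ range (m + 1),
        (((m.choose i) ^ 2 * (m - i).factorial : ℕ) : R) * ε ^ (m - i) *
          ∏ j ∈ range i, (N - (j : R) * ε) := by
  induction m with
  | zero => simp
  | succ m ih =>
    rw [prod_range_succ, ih, sum_mul]
    have key : ∀ i ∈ range (m + 1),
        (((m.choose i) ^ 2 * (m - i).factorial : ℕ) : R) * ε ^ (m - i) *
            (∏ j ∈ range i, (N - (j : R) * ε)) * (N + ((m : R) + 1) * ε) =
          (((m.choose i) ^ 2 * (m - i).factorial : ℕ) : R) * ε ^ (m - i) *
              ∏ j ∈ range (i + 1), (N - (j : R) * ε) +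
            (((m.choose i) ^ 2 * (m - i).factorial * (m + 1 + i) : ℕ) : R) * ε ^ (m + 1 - i) *
              ∏ j ∈ range i, (N - (j : R) * ε) := by
      intro i hi
      rw [mem_range] at hi
      rw [prod_range_succ, show m + 1 - i = (m - i) + 1 by omega, pow_succ]
      push_cast
      ring
    rw [sum_congr rfl key, sum_add_distrib]
    conv_rhs => rw [sum_range_succ']
    rw [sum_range_succ' (fun i =>
      ((((m.choose i) ^ 2 * (m - i).factorial * (m + 1 + i) : ℕ) : R) * ε ^ (m + 1 - i) *
        ∏ j ∈ range i, (N - (j : R) * ε))) m]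
    have hext : (∑ i ∈ range m,
          ((((m.choose (i + 1)) ^ 2 * (m - (i + 1)).factorial * (m + 1 + (i + 1)) : ℕ) : R) *
            ε ^ (m + 1 - (i + 1)) * ∏ j ∈ range (i + 1), (N - (j : R) * ε)))
        = ∑ i ∈ range (m + 1),
          ((((m.choose (i + 1)) ^ 2 * (m - (i + 1)).factorial * (m + 1 + (i + 1)) : ℕ) : R) *
            ε ^ (m + 1 - (i + 1)) * ∏ j ∈ range (i + 1), (N - (j : R) * ε)) := by
      rw [sum_range_succ]
      simp [Nat.choose_succ_self]
    rw [hext, ← add_assoc, ← sum_add_distrib]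
    congr 1
    · apply sum_congr rfl
      intro i hi
      rw [mem_range] at hi
      have him : i ≤ m := by omega
      rw [show m + 1 - (i + 1) = m - i by omega, show m - (i + 1) = m - i - 1 by omega,
        show m + 1 + (i + 1) = m + 2 + i by omega]
      have hc := natB m i him
      have hc' : ((((m + 1).choose (i + 1)) ^ 2 * (m - i).factorial : ℕ) : R) =
          (((m.choose i) ^ 2 * (m - i).factorial : ℕ) : R) +
            (((m + 2 + i) * ((m.choose (i + 1)) ^ 2 * (m - i - 1).factorial) : ℕ) : R) := by
        exact_mod_cast congrArg (Nat.cast (R := R)) hc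
      push_cast at hc' ⊢
      linear_combination (-(ε ^ (m - i)) * ∏ j ∈ range (i + 1), (N - (j : R) * ε)) * hc'
    · simp [Nat.factorial_succ]
      ring

open Finset in
theorem noncommutativity_identity (R : Type*) [CommRing R] (N ε t s : R)
    (h : t - s = ε) (n : ℕ) :
    ∑ k ∈ Finset.range (n + 1), (k.factorial : R) * t ^ k * (n.choose k : R) ^ 2 *
        ∏ j ∈ Finset.range (n - k), (N - (j : R) * ε) =
      ∑ k ∈ Finset.range (n + 1), (k.factorial : R) * s ^ k * (n.choose k : R) ^ 2 *
        ∏ j ∈ Finset.range (n - k), (N + ((j : R) + 1) * ε) := by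
  have ht : t = s + ε := by linear_combination h
  subst ht
  have hL : ∀ k ∈ range (n + 1),
      (k.factorial : R) * (s + ε) ^ k * (n.choose k : R) ^ 2 *
          ∏ j ∈ range (n - k), (N - (j : R) * ε) =
        ∑ a ∈ range (k + 1),
          (k.factorial : R) * (n.choose k : R) ^ 2 * (k.choose a : R) * s ^ a * ε ^ (k - a) *
            ∏ j ∈ range (n - k), (N - (j : R) * ε) := by
    intro k hk
    rw [add_pow, Finset.mul_sum, Finset.sum_mul, Finset.sum_mul]
    exact sum_congr rfl fun a ha => by ring
  have hR : ∀ k ∈ range (n + 1),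
      (k.factorial : R) * s ^ k * (n.choose k : R) ^ 2 *
          ∏ j ∈ range (n - k), (N + ((j : R) + 1) * ε) =
        ∑ i ∈ range (n - k + 1),
          (k.factorial : R) * (n.choose k : R) ^ 2 *
              ((((n - k).choose i) ^ 2 * (n - k - i).factorial : ℕ) : R) * s ^ k *
              ε ^ (n - k - i) * ∏ j ∈ range i, (N - (j : R) * ε) := by
    intro k hk
    rw [lah, Finset.mul_sum]
    exact sum_congr rfl fun i hi => by ring
  rw [sum_congr rfl hL, sum_congr rfl hR, sum_sigma', sum_sigma']
  refine sum_nbij' (fun x => ⟨x.2, n - x.1⟩) (fun x => ⟨n - x.2, x.1⟩) ?_ ?_ ?_ ?_ ?_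
  · rintro ⟨k, a⟩ hx
    simp only [mem_sigma, mem_range] at hx ⊢
    omega
  · rintro ⟨k, i⟩ hx
    simp only [mem_sigma, mem_range] at hx ⊢
    omega
  · rintro ⟨k, a⟩ hx
    simp only [mem_sigma, mem_range] at hx
    simp [show n - (n - k) = k by omega]
  · rintro ⟨k, i⟩ hx
    simp only [mem_sigma, mem_range] at hx
    simp [show n - (n - i) = i by omega]
  · rintro ⟨k, a⟩ hx
    simp only [mem_sigma, mem_range] at hx
    obtain ⟨hk, ha⟩ := hx
    have hak : a ≤ k := by omega
    have hkn : k ≤ n := by omega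
    simp only
    rw [show n - a - (n - k) = k - a by omega,
      show (n - a).choose (n - k) = (n - a).choose (k - a) by
        rw [← Nat.choose_symm (show n - k ≤ n - a by omega), show n - a - (n - k) = k - a by omega]]
    have hc := natC n k a hak hkn
    have hc' : ((k.factorial * (n.choose k) ^ 2 * k.choose a : ℕ) : R) =
        ((a.factorial * (k - a).factorial * (n.choose a) ^ 2 *
          ((n - a).choose (k - a)) ^ 2 : ℕ) : R) := by exact_mod_cast congrArg (Nat.cast (R := R)) hc
    push_cast at hc' ⊢
    linear_combination (s ^ a * ε ^ (k - a) * ∏ j ∈ range (n - k), (N - (j : R) * ε)) * hc'
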